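/- Let v > 0, y ∈ ℝ, and h ≥ 0. Then the Gaussian probability measure N(y, v) on ℝ satisfies N(y, v)([y − h, y + h]) ≥ (√2 · h)/√(π·v) · exp(−h²/(2v)). -/

import Mathlib

open MeasureTheory ProbabilityTheory

/-- The probability that a Gaussian `N(y, v)` sample falls within distance `h` of its mean `y`
is at least `√2·h/√(π·v) · exp(-h²/(2v))` (Section A.4 of the supplementary material). -/
theorem gaussian_interval_lower_bound (v : NNReal) (hv : 0 < v) (y : ℝ) (h : ℝ) (hh : 0 ≤ h) :
    ENNReal.ofReal (Real.sqrt 2 * h / Real.sqrt (Real.pi * v) * Real.exp (-h ^ 2 / (2 * v)))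
      ≤ gaussianReal y v (Set.Icc (y - h) (y + h)) := by
  have hv' : v ≠ 0 := hv.ne'
  have hvR : (0 : ℝ) < (v : ℝ) := hv
  rw [gaussianReal_apply_eq_integral _ hv']
  apply ENNReal.ofReal_le_ofReal
  set c : ℝ := (Real.sqrt (2 * Real.pi * v))⁻¹ * Real.exp (-h ^ 2 / (2 * v)) with hc
  have hbound : ∀ x ∈ Set.Icc (y - h) (y + h), c ≤ gaussianPDFReal y v x := by
    intro x hx
    rw [gaussianPDFReal]
    apply mul_le_mul_of_nonneg_left _ (by positivity)
    apply Real.exp_le_exp.mpr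
    apply div_le_div_of_nonneg_right _ (by positivity)
    · rw [neg_le_neg_iff]
      have h1 : |x - y| ≤ h := by
        rw [abs_le]; constructor <;> [linarith [hx.1]; linarith [hx.2]]
      calc (x - y) ^ 2 = |x - y| ^ 2 := by rw [sq_abs]
        _ ≤ h ^ 2 := by nlinarith [abs_nonneg (x - y)]
  have hint : c * (2 * h) ≤ ∫ x in Set.Icc (y - h) (y + h), gaussianPDFReal y v x := by
    have := setIntegral_mono_on
      (integrableOn_const (by simp [Real.volume_Icc]))
      ((integrable_gaussianPDFReal y v).restrict)
      measurableSet_Icc hbound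
    rw [setIntegral_const] at this
    refine le_trans (le_of_eq ?_) this
    rw [measureReal_def, Real.volume_Icc]
    have : y + h - (y - h) = 2 * h := by ring
    rw [this, ENNReal.toReal_ofReal (by positivity), smul_eq_mul, mul_comm]
  refine le_trans (le_of_eq ?_) hint
  rw [hc]
  have h2 : Real.sqrt (2 * Real.pi * v) = Real.sqrt 2 * Real.sqrt (Real.pi * v) := by
    rw [← Real.sqrt_mul (by norm_num), mul_assoc]
  rw [h2]
  have hpv : (0:ℝ) < Real.sqrt (Real.pi * v) := Real.sqrt_pos.mpr (by positivity)
  have hs2 : (0:ℝ) < Real.sqrt 2 := by positivity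
  field_simp
  ring_nf
  rw [Real.sq_sqrt (by norm_num : (2:ℝ) ≥ 0)]
  ring
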